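/- Let C ⊆ S²_B Λ²ℝⁿ (n ≥ 4) be a curvature cone containing a nonzero element of S²₀ℝⁿ∧id (the traceless-Ricci part, i.e., conformally flat scalar flat operators). Then S²₀ℝⁿ∧id ⊆ C. -/

import Mathlib

open Matrix

noncomputable section

/-- The ambient space of 4-tensors on ℝⁿ; a curvature operator R on Λ²ℝⁿ is recorded
by its components R i j k l = ⟨R(eᵢ∧eⱼ), eₖ∧eₗ⟩. -/
abbrev Tn (n : ℕ) : Type := Fin n → Fin n → Fin n → Fin n → ℝ

/-- The space S²_BΛ²ℝⁿ of algebraic curvature operators: symmetric endomorphisms of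
Λ²ℝⁿ (antisymmetry in the first and last pairs, symmetry in exchanging the pairs)
satisfying the first Bianchi identity. -/
def CurvOp (n : ℕ) : Submodule ℝ (Tn n) where
  carrier := {R | (∀ i j k l, R j i k l = -R i j k l) ∧
    (∀ i j k l, R i j l k = -R i j k l) ∧
    (∀ i j k l, R k l i j = R i j k l) ∧
    (∀ i j k l, R i j k l + R k i j l + R j k i l = 0)}
  add_mem' := by
    rintro a b ⟨ha1, ha2, ha3, ha4⟩ ⟨hb1, hb2, hb3, hb4⟩
    refine ⟨fun i j k l => ?_, fun i j k l => ?_, fun i j k l => ?_, fun i j k l => ?_⟩ <;>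
      simp only [Pi.add_apply]
    · linear_combination ha1 i j k l + hb1 i j k l
    · linear_combination ha2 i j k l + hb2 i j k l
    · linear_combination ha3 i j k l + hb3 i j k l
    · linear_combination ha4 i j k l + hb4 i j k l
  zero_mem' := ⟨fun _ _ _ _ => by simp, fun _ _ _ _ => by simp,
    fun _ _ _ _ => by simp, fun _ _ _ _ => by simp⟩
  smul_mem' := by
    rintro c a ⟨ha1, ha2, ha3, ha4⟩
    refine ⟨fun i j k l => ?_, fun i j k l => ?_, fun i j k l => ?_, fun i j k l => ?_⟩ <;>
      simp only [Pi.smul_apply, smul_eq_mul]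
    · linear_combination c * ha1 i j k l
    · linear_combination c * ha2 i j k l
    · linear_combination c * ha3 i j k l
    · linear_combination c * ha4 i j k l

/-- The action of g ∈ O(n) on curvature operators:
(g·R) i j k l = ⟨R(geᵢ∧geⱼ), geₖ∧geₗ⟩. -/
def act {n : ℕ} (g : Matrix (Fin n) (Fin n) ℝ) (R : Tn n) : Tn n :=
  fun i j k l => ∑ a, ∑ b, ∑ c, ∑ d, R a b c d * g a i * g b j * g c k * g d l

/-- The trace of a curvature operator (as an endomorphism of Λ²ℝⁿ); the scalar
curvature is twice this. -/
def trT {n : ℕ} (R : Tn n) : ℝ := (∑ i, ∑ j, R i j i j) / 2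

/-- The identity operator Id of Λ²ℝⁿ, as a 4-tensor. -/
def IdT (n : ℕ) : Tn n := fun i j k l =>
  (if i = k then (1 : ℝ) else 0) * (if j = l then 1 else 0)
    - (if i = l then (1 : ℝ) else 0) * (if j = k then 1 else 0)

/-- The Ricci tensor of a curvature operator. -/
def ricT {n : ℕ} (R : Tn n) (i k : Fin n) : ℝ := ∑ j, R i j k j

/-- The Weyl space W: curvature operators with vanishing Ricci tensor. -/
def WeylSet (n : ℕ) : Set (Tn n) :=
  {R | R ∈ CurvOp n ∧ ∀ i k, ricT R i k = 0}

/-- The tensor of A∧B, (A∧B)(x∧y) = (1/2)(Ax∧By + Bx∧Ay), for symmetric matrices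
A, B. -/
def wedgeT {n : ℕ} (A B : Matrix (Fin n) (Fin n) ℝ) : Tn n := fun i j k l =>
  (A k i * B l j - A l i * B k j + B k i * A l j - B l i * A k j) / 2

/-- The space S²₀ℝⁿ∧id of curvature operators A₀∧id with A₀ traceless symmetric
(equivalently: conformally flat scalar flat curvature operators). -/
def S20Set (n : ℕ) : Set (Tn n) :=
  {R | ∃ A : Matrix (Fin n) (Fin n) ℝ, Aᵀ = A ∧ A.trace = 0 ∧ R = wedgeT A 1}

/-- A curvature cone: a closed convex cone C ⊆ S²_BΛ²ℝⁿ, invariant under the action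
of O(n), with Id in its interior (interior relative to S²_BΛ²ℝⁿ). -/
def IsCurvCone (n : ℕ) (C : Set (Tn n)) : Prop :=
  C ⊆ (CurvOp n : Set (Tn n)) ∧ IsClosed C ∧ Convex ℝ C ∧
    (∀ x ∈ C, ∀ r : ℝ, 0 ≤ r → r • x ∈ C) ∧
    (∀ g : Matrix (Fin n) (Fin n) ℝ, g * gᵀ = 1 → gᵀ * g = 1 →
      ∀ R ∈ C, act g R ∈ C) ∧
    (∃ ε > (0 : ℝ), ∀ R ∈ CurvOp n, ‖R - IdT n‖ < ε → R ∈ C)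

section Aux

variable {n : ℕ}

/-- Factoring a product of two conjugated matrix entries as a quadruple sum. -/
lemma quadsum (g M N : Matrix (Fin n) (Fin n) ℝ) (p q r s : Fin n) :
    (gᵀ * M * g) p q * (gᵀ * N * g) r s
      = ∑ a, ∑ b, ∑ c, ∑ d, M c a * N d b * g a q * g b s * g c p * g d r := by
  have h1 : (gᵀ * M * g) p q = ∑ a, ∑ c, g c p * M c a * g a q := by
    simp only [Matrix.mul_apply, Matrix.transpose_apply, Finset.sum_mul]
  have h2 : (gᵀ * N * g) r s = ∑ b, ∑ d, g d r * N d b * g b s := by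
    simp only [Matrix.mul_apply, Matrix.transpose_apply, Finset.sum_mul]
  rw [h1, h2, Finset.sum_mul_sum]
  refine Finset.sum_congr rfl fun a _ => ?_
  refine Finset.sum_congr rfl fun b _ => ?_
  rw [Finset.sum_mul_sum]
  refine Finset.sum_congr rfl fun c _ => ?_
  refine Finset.sum_congr rfl fun d _ => ?_
  ring

lemma quadsum' (g M N : Matrix (Fin n) (Fin n) ℝ) (p q r s : Fin n) :
    (gᵀ * M * g) p q * (gᵀ * N * g) r s
      = ∑ a, ∑ b, ∑ c, ∑ d, M d a * N c b * g a q * g b s * g c r * g d p := by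
  rw [quadsum]
  refine Finset.sum_congr rfl fun a _ => ?_
  refine Finset.sum_congr rfl fun b _ => ?_
  rw [Finset.sum_comm]
  refine Finset.sum_congr rfl fun c _ => ?_
  refine Finset.sum_congr rfl fun d _ => ?_
  ring

/-- Equivariance of the wedge under the action of a matrix. -/
lemma act_wedgeT (g A B : Matrix (Fin n) (Fin n) ℝ) :
    act g (wedgeT A B) = wedgeT (gᵀ * A * g) (gᵀ * B * g) := by
  funext i j k l
  simp only [act, wedgeT]
  rw [quadsum g A B k i l j, quadsum' g A B l i k j, quadsum g B A k i l j,
    quadsum' g B A l i k j]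
  simp only [← Finset.sum_sub_distrib, ← Finset.sum_add_distrib, Finset.sum_div]
  refine Finset.sum_congr rfl fun a _ => ?_
  refine Finset.sum_congr rfl fun b _ => ?_
  refine Finset.sum_congr rfl fun c _ => ?_
  refine Finset.sum_congr rfl fun d _ => ?_
  ring

lemma wedgeT_add (A B D : Matrix (Fin n) (Fin n) ℝ) :
    wedgeT (A + B) D = wedgeT A D + wedgeT B D := by
  funext i j k l
  simp only [wedgeT, Matrix.add_apply, Pi.add_apply]
  ring

lemma wedgeT_smul (r : ℝ) (A D : Matrix (Fin n) (Fin n) ℝ) :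
    wedgeT (r • A) D = r • wedgeT A D := by
  funext i j k l
  simp only [wedgeT, Matrix.smul_apply, Pi.smul_apply, smul_eq_mul]
  ring

lemma wedgeT_zero (D : Matrix (Fin n) (Fin n) ℝ) : wedgeT (0 : Matrix (Fin n) (Fin n) ℝ) D = 0 := by
  funext i j k l
  simp [wedgeT]

/-- The permutation matrix of σ. -/
def pmat (σ : Equiv.Perm (Fin n)) : Matrix (Fin n) (Fin n) ℝ :=
  fun i j => if i = σ j then 1 else 0

lemma pmat_tmul (σ : Equiv.Perm (Fin n)) : (pmat σ)ᵀ * pmat σ = 1 := by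
  ext j j'
  simp only [Matrix.mul_apply, Matrix.transpose_apply, pmat, Matrix.one_apply, ite_mul, one_mul,
    zero_mul]
  simp [Finset.sum_ite_eq']

lemma pmat_mult (σ : Equiv.Perm (Fin n)) : pmat σ * (pmat σ)ᵀ = 1 := by
  ext a a'
  simp only [Matrix.mul_apply, Matrix.transpose_apply, pmat, Matrix.one_apply]
  rw [Fintype.sum_equiv σ
    (fun j => (if a = σ j then (1:ℝ) else 0) * (if a' = σ j then 1 else 0))
    (fun m => (if a = m then (1:ℝ) else 0) * (if a' = m then 1 else 0))
    (fun j => rfl)]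
  simp only [ite_mul, one_mul, zero_mul]
  rw [Finset.sum_ite_eq]
  rcases eq_or_ne a a' with rfl | h
  · simp
  · simp [h, Ne.symm h]

lemma pmat_diag (σ : Equiv.Perm (Fin n)) (d : Fin n → ℝ) :
    (pmat σ)ᵀ * Matrix.diagonal d * pmat σ = Matrix.diagonal (d ∘ σ) := by
  ext j j'
  simp only [Matrix.mul_apply, Matrix.transpose_apply, pmat, Matrix.diagonal_apply,
    Function.comp_apply, ite_mul, one_mul, zero_mul, mul_ite, mul_one, mul_zero]
  simp only [Finset.sum_ite_eq', Finset.mem_univ, if_true]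
  rcases eq_or_ne j j' with rfl | h
  · simp
  · simp [h, Ne.symm h]

lemma diag_add' (x y : Fin n → ℝ) :
    Matrix.diagonal (x + y) = Matrix.diagonal x + Matrix.diagonal y := by
  ext i j
  rcases eq_or_ne i j with rfl | h
  · simp [Matrix.diagonal_apply]
  · simp [Matrix.diagonal_apply, h]

lemma diag_smul' (r : ℝ) (x : Fin n → ℝ) :
    Matrix.diagonal (r • x) = r • Matrix.diagonal x := by
  ext i j
  rcases eq_or_ne i j with rfl | h
  · simp [Matrix.diagonal_apply]
  · simp [Matrix.diagonal_apply, h]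

end Aux

section Key

/-- The elementary difference vector. -/
def ev {n : ℕ} (k l : Fin n) : Fin n → ℝ :=
  fun x => (if x = k then (1:ℝ) else 0) - (if x = l then 1 else 0)

lemma ev_sum {n : ℕ} (k l : Fin n) : ∑ x, ev k l x = 0 := by
  simp [ev, Finset.sum_sub_distrib]

/-- A set of vectors closed under addition, nonnegative scaling and permutations,
containing a nonzero vector with zero sum, contains every vector with zero sum. -/
lemma key {n : ℕ} (hn : 0 < n) (S : Set (Fin n → ℝ))
    (h0 : (0 : Fin n → ℝ) ∈ S)
    (hadd : ∀ x ∈ S, ∀ y ∈ S, x + y ∈ S)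
    (hsmul : ∀ x ∈ S, ∀ r : ℝ, 0 ≤ r → r • x ∈ S)
    (hperm : ∀ x ∈ S, ∀ σ : Equiv.Perm (Fin n), x ∘ σ ∈ S)
    (lam : Fin n → ℝ) (hlamS : lam ∈ S) (hlam0 : ∑ i, lam i = 0) (hlamne : lam ≠ 0)
    (μ : Fin n → ℝ) (hμ0 : ∑ i, μ i = 0) : μ ∈ S := by
  haveI : NeZero n := ⟨hn.ne'⟩
  have hsumS : ∀ (t : Finset (Fin n)) (f : Fin n → Fin n → ℝ),
      (∀ i ∈ t, f i ∈ S) → (∑ i ∈ t, f i) ∈ S := fun t f hf =>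
    Finset.sum_induction f (· ∈ S) (fun a b ha hb => hadd a ha b hb) h0 hf
  -- negation of zero-sum elements
  have hneg : ∀ d ∈ S, (∑ i, d i = 0) → -d ∈ S := by
    intro d hd hd0
    have hall : ∑ j : Fin n, (d ∘ (Equiv.addRight j)) = 0 := by
      funext k
      rw [Finset.sum_apply]
      have h1 : ∀ j : Fin n, (d ∘ (Equiv.addRight j)) k = d (k + j) := fun j => by simp
      rw [Finset.sum_congr rfl fun j _ => h1 j,
        Fintype.sum_equiv (Equiv.addLeft k) (fun j => d (k + j)) d (fun j => by simp), hd0]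
      rfl
    have hsplit : d + ∑ j ∈ Finset.univ.erase (0 : Fin n), (d ∘ (Equiv.addRight j)) = 0 := by
      rw [← hall, ← Finset.add_sum_erase _ _ (Finset.mem_univ (0 : Fin n))]
      congr 1
      funext k; simp
    rw [neg_eq_of_add_eq_zero_right hsplit]
    exact hsumS _ _ (fun j _ => hperm d hd _)
  -- scaling by arbitrary reals
  have hsmul' : ∀ d ∈ S, (∑ i, d i = 0) → ∀ r : ℝ, r • d ∈ S := by
    intro d hd hd0 r
    rcases le_or_gt 0 r with h | h
    · exact hsmul d hd r h
    · have h1 : -d ∈ S := hneg d hd hd0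
      have h2 : r • d = (-r) • (-d) := by simp
      rw [h2]; exact hsmul _ h1 (-r) (by linarith)
  -- two distinct values
  have hpair : ∃ i j : Fin n, lam i ≠ lam j := by
    by_contra h
    push_neg at h
    apply hlamne
    funext i
    have h2 : ∑ j, lam j = (n : ℝ) * lam i := by
      rw [Finset.sum_congr rfl (fun j _ => h j i)]
      simp [Finset.sum_const, Finset.card_univ, mul_comm]
    have h3 : (n : ℝ) * lam i = 0 := by rw [← h2, hlam0]
    have h4 : lam i = 0 := by
      rcases mul_eq_zero.mp h3 with h5 | h5
      · exact absurd h5 (by positivity)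
      · exact h5
    exact h4
  obtain ⟨i0, j0, hij⟩ := hpair
  have hne : i0 ≠ j0 := fun h => hij (by rw [h])
  -- base pair
  have hbase : ev i0 j0 ∈ S := by
    have h1 : lam ∘ (Equiv.swap i0 j0) ∈ S := hperm lam hlamS _
    have h2 : -lam ∈ S := hneg lam hlamS hlam0
    have h3 : lam ∘ (Equiv.swap i0 j0) + (-lam) ∈ S := hadd _ h1 _ h2
    have h4 : lam ∘ (Equiv.swap i0 j0) + (-lam) = (lam j0 - lam i0) • ev i0 j0 := by
      funext x
      simp only [Pi.add_apply, Pi.neg_apply, Pi.smul_apply, Function.comp_apply, ev, smul_eq_mul]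
      rcases eq_or_ne x i0 with rfl | hxi
      · rw [Equiv.swap_apply_left, if_pos rfl, if_neg hne]
        ring
      · rcases eq_or_ne x j0 with rfl | hxj
        · rw [Equiv.swap_apply_right, if_neg (Ne.symm hne), if_pos rfl]
          ring
        · rw [Equiv.swap_apply_of_ne_of_ne hxi hxj, if_neg hxi, if_neg hxj]
          ring
    rw [h4] at h3
    have h5 : ∑ x, ((lam j0 - lam i0) • ev i0 j0) x = 0 := by
      simp only [Pi.smul_apply, smul_eq_mul, ← Finset.mul_sum, ev_sum, mul_zero]
    have h6 := hsmul' _ h3 h5 ((lam j0 - lam i0)⁻¹)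
    have h7 : (lam j0 - lam i0)⁻¹ • ((lam j0 - lam i0) • ev i0 j0) = ev i0 j0 := by
      rw [smul_smul, inv_mul_cancel₀ (sub_ne_zero_of_ne (Ne.symm hij)), one_smul]
    rwa [h7] at h6
  -- all pairs
  have hall : ∀ k l : Fin n, k ≠ l → ev k l ∈ S := by
    intro k l hkl
    have hla : Equiv.swap k i0 l ≠ i0 := by
      rcases eq_or_ne l i0 with rfl | h
      · rw [Equiv.swap_apply_right]
        exact hkl
      · rw [Equiv.swap_apply_of_ne_of_ne (Ne.symm hkl) h]
        exact h
    set σ : Equiv.Perm (Fin n) := (Equiv.swap k i0).trans (Equiv.swap (Equiv.swap k i0 l) j0)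
      with hσ
    have hk : σ k = i0 := by
      simp only [hσ, Equiv.trans_apply, Equiv.swap_apply_left]
      exact Equiv.swap_apply_of_ne_of_ne (Ne.symm hla) hne
    have hl : σ l = j0 := by
      simp only [hσ, Equiv.trans_apply]
      exact Equiv.swap_apply_left _ _
    have hcomp : ev i0 j0 ∘ σ = ev k l := by
      funext x
      simp only [Function.comp_apply, ev]
      congr 1
      · rcases eq_or_ne x k with rfl | hx
        · simp [hk]
        · have hx2 : σ x ≠ i0 := fun hc => hx (σ.injective (hc.trans hk.symm))
          simp [hx, hx2]
      · rcases eq_or_ne x l with rfl | hx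
        · simp [hl]
        · have hx2 : σ x ≠ j0 := fun hc => hx (σ.injective (hc.trans hl.symm))
          simp [hx, hx2]
    rw [← hcomp]
    exact hperm _ hbase σ
  -- decomposition of μ
  set z : Fin n := ⟨0, hn⟩ with hz
  have hsz : ∑ i ∈ Finset.univ.erase z, μ i = -μ z := by
    have h1 := Finset.add_sum_erase Finset.univ μ (Finset.mem_univ z)
    rw [hμ0] at h1
    linarith
  have hdecomp : μ = ∑ i ∈ Finset.univ.erase z, μ i • ev i z := by
    funext x
    rw [Finset.sum_apply]
    symm
    rcases eq_or_ne x z with rfl | hx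
    · have h1 : ∀ i ∈ Finset.univ.erase z, (μ i • ev i z) z = -μ i := by
        intro i hi
        have h2 : z ≠ i := fun hc => (Finset.mem_erase.mp hi).1 hc.symm
        simp [ev, h2]
      rw [Finset.sum_congr rfl h1, Finset.sum_neg_distrib, hsz, neg_neg]
    · have h1 : ∀ i ∈ Finset.univ.erase z, (μ i • ev i z) x = if x = i then μ i else 0 := by
        intro i _
        simp [ev, hx, mul_ite]
      rw [Finset.sum_congr rfl h1, Finset.sum_ite_eq]
      simp [hx, Finset.mem_erase]
  rw [hdecomp]
  refine hsumS _ _ (fun i hi => ?_)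
  exact hsmul' _ (hall i z (Finset.mem_erase.mp hi).1) (ev_sum i z) (μ i)

end Key

/-- Orthogonal diagonalization of a real symmetric matrix, packaged. -/
lemma diag_spectral {n : ℕ} (A : Matrix (Fin n) (Fin n) ℝ) (hsym : Aᵀ = A) :
    ∃ (g : Matrix (Fin n) (Fin n) ℝ) (d : Fin n → ℝ),
      g * gᵀ = 1 ∧ gᵀ * g = 1 ∧ gᵀ * A * g = Matrix.diagonal d ∧ ∑ i, d i = A.trace := by
  have hherm : A.IsHermitian := by
    have h1 : Aᴴ = Aᵀ := by ext i j; simp [Matrix.conjTranspose_apply]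
    rw [Matrix.IsHermitian, h1, hsym]
  set U : Matrix (Fin n) (Fin n) ℝ := (hherm.eigenvectorUnitary : Matrix (Fin n) (Fin n) ℝ) with hU
  have hstar : star U = Uᵀ := by
    have h1 : star U = Uᴴ := rfl
    rw [h1]; ext i j; simp [Matrix.conjTranspose_apply]
  have hU1 : U * Uᵀ = 1 := by
    rw [← hstar]; exact Matrix.mem_unitaryGroup_iff.mp hherm.eigenvectorUnitary.2
  have hU2 : Uᵀ * U = 1 := by
    rw [← hstar]; exact Matrix.mem_unitaryGroup_iff'.mp hherm.eigenvectorUnitary.2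
  have hdiag : Uᵀ * A * U = Matrix.diagonal hherm.eigenvalues := by
    have h := hherm.conjStarAlgAut_star_eigenvectorUnitary
    rw [Unitary.conjStarAlgAut_star_apply] at h
    rw [← hstar, h, RCLike.ofReal_real_eq_id]
    rfl
  refine ⟨U, hherm.eigenvalues, hU1, hU2, hdiag, ?_⟩
  rw [← Matrix.trace_diagonal, ← hdiag, ← hstar, Matrix.trace_mul_cycle,
    Matrix.mem_unitaryGroup_iff.mp hherm.eigenvectorUnitary.2, Matrix.one_mul]

/-- Let C ⊆ S²_BΛ²ℝⁿ (n ≥ 4) be a curvature cone containing a nonzero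
element of S²₀ℝⁿ∧id (the traceless-Ricci part, i.e. conformally flat scalar flat
curvature operators).  Then S²₀ℝⁿ∧id ⊆ C. -/
theorem stmt17 (n : ℕ) (hn : 4 ≤ n) (C : Set (Tn n)) (hC : IsCurvCone n C)
    (R₀ : Tn n) (hR₀C : R₀ ∈ C) (hR₀ : R₀ ∈ S20Set n) (hne : R₀ ≠ 0) :
    S20Set n ⊆ C := by
  obtain ⟨hsub, hcl, hconv, hscale, hinv, hball⟩ := hC
  obtain ⟨A₀, hA₀sym, hA₀tr, hR₀eq⟩ := hR₀
  have h0n : 0 < n := by omega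
  have hzeroC : (0 : Tn n) ∈ C := by
    have := hscale R₀ hR₀C 0 le_rfl
    simpa using this
  have hCadd : ∀ x ∈ C, ∀ y ∈ C, x + y ∈ C := by
    intro x hx y hy
    have h := hconv hx hy (by norm_num : (0:ℝ) ≤ 1/2) (by norm_num : (0:ℝ) ≤ 1/2)
      (by norm_num)
    have h2 := hscale _ h 2 (by norm_num)
    have h3 : (2:ℝ) • ((1/2:ℝ) • x + (1/2:ℝ) • y) = x + y := by
      rw [smul_add, smul_smul, smul_smul]; norm_num
    rwa [h3] at h2
  have hdz : Matrix.diagonal (0 : Fin n → ℝ) = 0 := Matrix.diagonal_zero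
  set S : Set (Fin n → ℝ) := {d | wedgeT (Matrix.diagonal d) 1 ∈ C} with hS
  have hS0 : (0 : Fin n → ℝ) ∈ S := by
    show wedgeT (Matrix.diagonal 0) 1 ∈ C
    rw [hdz, wedgeT_zero]
    exact hzeroC
  have hSadd : ∀ x ∈ S, ∀ y ∈ S, x + y ∈ S := by
    intro x hx y hy
    show wedgeT (Matrix.diagonal (x + y)) 1 ∈ C
    rw [diag_add', wedgeT_add]
    exact hCadd _ hx _ hy
  have hSsmul : ∀ x ∈ S, ∀ r : ℝ, 0 ≤ r → r • x ∈ S := by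
    intro x hx r hr
    show wedgeT (Matrix.diagonal (r • x)) 1 ∈ C
    rw [diag_smul', wedgeT_smul]
    exact hscale _ hx r hr
  have hSperm : ∀ x ∈ S, ∀ σ : Equiv.Perm (Fin n), x ∘ σ ∈ S := by
    intro x hx σ
    show wedgeT (Matrix.diagonal (x ∘ σ)) 1 ∈ C
    have h1 : wedgeT (Matrix.diagonal (x ∘ σ)) 1
        = act (pmat σ) (wedgeT (Matrix.diagonal x) 1) := by
      rw [act_wedgeT, pmat_diag, Matrix.mul_one, pmat_tmul]
    rw [h1]
    exact hinv (pmat σ) (pmat_mult σ) (pmat_tmul σ) _ hx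
  have hconj : ∀ (B g : Matrix (Fin n) (Fin n) ℝ),
      g * gᵀ = 1 → gᵀ * g = 1 → wedgeT B 1 ∈ C → wedgeT (gᵀ * B * g) 1 ∈ C := by
    intro B g hg1 hg2 hB
    have h1 : wedgeT (gᵀ * B * g) 1 = act g (wedgeT B 1) := by
      rw [act_wedgeT, Matrix.mul_one, hg2]
    rw [h1]
    exact hinv g hg1 hg2 _ hB
  obtain ⟨g₀, d₀, hg₀1, hg₀2, hg₀3, hg₀4⟩ := diag_spectral A₀ hA₀sym
  have hlamS : d₀ ∈ S := by
    show wedgeT (Matrix.diagonal d₀) 1 ∈ C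
    rw [← hg₀3]
    exact hconj A₀ g₀ hg₀1 hg₀2 (hR₀eq ▸ hR₀C)
  have hlam0 : ∑ i, d₀ i = 0 := by rw [hg₀4, hA₀tr]
  have hlamne : d₀ ≠ 0 := by
    intro h
    apply hne
    have h2 : g₀ᵀ * A₀ * g₀ = 0 := by rw [hg₀3, h, hdz]
    have h1 : A₀ = 0 := by
      calc A₀ = (g₀ * g₀ᵀ) * A₀ * (g₀ * g₀ᵀ) := by rw [hg₀1, Matrix.one_mul, Matrix.mul_one]
        _ = g₀ * (g₀ᵀ * A₀ * g₀) * g₀ᵀ := by simp only [Matrix.mul_assoc]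
        _ = 0 := by rw [h2, Matrix.mul_zero, Matrix.zero_mul]
    rw [hR₀eq, h1, wedgeT_zero]
  intro R hR
  obtain ⟨A, hAsym, hAtr, rfl⟩ := hR
  obtain ⟨g, d, hg1, hg2, hg3, hg4⟩ := diag_spectral A hAsym
  have hd0 : ∑ i, d i = 0 := by rw [hg4, hAtr]
  have hdS : d ∈ S := key h0n S hS0 hSadd hSsmul hSperm d₀ hlamS hlam0 hlamne d hd0
  have hA : (gᵀ)ᵀ * (Matrix.diagonal d) * gᵀ = A := by
    rw [Matrix.transpose_transpose, ← hg3]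
    calc g * (gᵀ * A * g) * gᵀ = (g * gᵀ) * A * (g * gᵀ) := by simp only [Matrix.mul_assoc]
      _ = A := by rw [hg1, Matrix.one_mul, Matrix.mul_one]
  have hfin := hconj (Matrix.diagonal d) gᵀ
    (by rw [Matrix.transpose_transpose]; exact hg2)
    (by rw [Matrix.transpose_transpose]; exact hg1) hdS
  rwa [hA] at hfin
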